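/- Consider the control-affine system ẋ = f(x) + g(x)u on ℝⁿ with control u ∈ ℝᵐ, where f : ℝⁿ → ℝⁿ and g : ℝⁿ → ℝⁿˣᵐ (matrices) are locally Lipschitz. Let B : ℝⁿ → ℝ be continuously differentiable, let α : ℝ → ℝ be a locally Lipschitz extended class-K∞ function, and let π : ℝⁿ → ℝᵐ be a locally Lipschitz policy such that for every x ∈ ℝⁿ, ⟪∇B(x), f(x) + g(x)·π(x)⟫ + α(B(x)) ≥ 0. If x : [0, ∞) → ℝⁿ is differentiable and satisfies the closed-loop ODE x'(t) = f(x(t)) + g(x(t))·π(x(t)) for all t ≥ 0, and B(x(0)) ≥ 0, then B(x(t)) ≥ 0 for all t ≥ 0; that is, the superlevel set B_{≥0} := {x | B(x) ≥ 0} is forward invariant under the policy π. -/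

import Mathlib

open scoped RealInnerProductSpace

attribute [local instance] Matrix.normedAddCommGroup

/-- Forward invariance of the superlevel set `{x | B x ≥ 0}` of a control
barrier function `B` under a policy `π` satisfying the CBF condition
`⟪∇B(x), f(x) + g(x)·π(x)⟫ + α(B(x)) ≥ 0` for the control-affine system
`ẋ = f(x) + g(x)u`. -/
theorem cbf_forward_invariance
    (n m : ℕ)
    (f : EuclideanSpace ℝ (Fin n) → EuclideanSpace ℝ (Fin n))
    (g : EuclideanSpace ℝ (Fin n) → Matrix (Fin n) (Fin m) ℝ)
    (hf : LocallyLipschitz f) (hg : LocallyLipschitz g)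
    (B : EuclideanSpace ℝ (Fin n) → ℝ) (hB : ContDiff ℝ 1 B)
    (α : ℝ → ℝ) (hα_lip : LocallyLipschitz α) (hα_mono : StrictMono α)
    (hα0 : α 0 = 0)
    (π : EuclideanSpace ℝ (Fin n) → EuclideanSpace ℝ (Fin m))
    (hπ : LocallyLipschitz π)
    (hcbf : ∀ p : EuclideanSpace ℝ (Fin n),
      0 ≤ ⟪gradient B p, f p +
          (EuclideanSpace.equiv (Fin n) ℝ).symm
            ((g p).mulVec (EuclideanSpace.equiv (Fin m) ℝ (π p)))⟫ + α (B p))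
    (x : ℝ → EuclideanSpace ℝ (Fin n))
    (hx : ∀ t, 0 ≤ t → HasDerivAt x
      (f (x t) + (EuclideanSpace.equiv (Fin n) ℝ).symm
        ((g (x t)).mulVec (EuclideanSpace.equiv (Fin m) ℝ (π (x t))))) t)
    (hx0 : 0 ≤ B (x 0)) :
    ∀ t, 0 ≤ t → 0 ≤ B (x t) := by
  -- abbreviation for the closed-loop vector field
  set F : EuclideanSpace ℝ (Fin n) → EuclideanSpace ℝ (Fin n) :=
    fun p => f p + (EuclideanSpace.equiv (Fin n) ℝ).symm
      ((g p).mulVec (EuclideanSpace.equiv (Fin m) ℝ (π p))) with hFdef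
  set y : ℝ → ℝ := fun s => B (x s) with hydef
  -- derivative of y for nonnegative times
  have hder : ∀ s, 0 ≤ s → HasDerivAt y (⟪gradient B (x s), F (x s)⟫) s := by
    intro s hs
    have hBd : DifferentiableAt ℝ B (x s) := (hB.differentiable one_ne_zero).differentiableAt
    have hgrad := hBd.hasGradientAt
    have hfd : HasFDerivAt B ((InnerProductSpace.toDual ℝ _) (gradient B (x s))) (x s) :=
      hgrad
    have h := hfd.comp_hasDerivAt s (hx s hs)
    rw [InnerProductSpace.toDual_apply_apply] at h
    exact h
  intro t ht
  by_contra hneg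
  push_neg at hneg
  have ht0 : 0 < t := by
    rcases eq_or_lt_of_le ht with h | h
    · exfalso; rw [← h] at hneg; exact absurd hx0 (not_le.mpr hneg)
    · exact h
  -- continuous extension of y to all of ℝ
  have hxcont : ∀ s : ℝ, 0 ≤ s → ContinuousAt x s := fun s hs => (hx s hs).continuousAt
  have hzcont : Continuous fun s : ℝ => y (max s 0) := by
    have : Continuous fun s : ℝ => x (max s 0) := by
      rw [continuous_iff_continuousAt]
      intro s
      show ContinuousAt (x ∘ fun u : ℝ => max u 0) s
      exact ContinuousAt.comp (hxcont (max s 0) (le_max_right _ _))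
        (continuous_id.max continuous_const).continuousAt
    exact hB.continuous.comp this
  -- the set of good times
  set S : Set ℝ := Set.Icc 0 t ∩ {s | 0 ≤ y (max s 0)} with hSdef
  have hScomp : IsCompact S :=
    (isCompact_Icc).inter_right (isClosed_le continuous_const hzcont)
  have hSne : S.Nonempty := ⟨0, ⟨le_refl 0, le_of_lt ht0⟩, by simpa using hx0⟩
  obtain ⟨s₀, hs₀mem, hs₀max⟩ : ∃ s₀ ∈ S, ∀ u ∈ S, u ≤ s₀ := by
    obtain ⟨s₀, hmem, hmax⟩ := hScomp.exists_isGreatest hSne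
    exact ⟨s₀, hmem, hmax⟩
  obtain ⟨⟨hs₀0, hs₀t⟩, hs₀y⟩ := hs₀mem
  have hys₀ : 0 ≤ y s₀ := by simpa [max_eq_left hs₀0] using hs₀y
  have hs₀lt : s₀ < t := by
    rcases lt_or_eq_of_le hs₀t with h | h
    · exact h
    · exfalso; rw [h] at hys₀; exact absurd hys₀ (not_le.mpr hneg)
  -- y is negative on (s₀, t]
  have hyneg : ∀ u, s₀ < u → u ≤ t → y u < 0 := by
    intro u hu hut
    by_contra hc
    push_neg at hc
    have hu0 : (0:ℝ) ≤ u := le_trans hs₀0 (le_of_lt hu)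
    have : u ∈ S := ⟨⟨hu0, hut⟩, by simpa [max_eq_left hu0] using hc⟩
    exact absurd (hs₀max u this) (not_le.mpr hu)
  -- mean value theorem on [s₀, t]
  have hcontIcc : ContinuousOn y (Set.Icc s₀ t) := fun s hs =>
    ((hder s (le_trans hs₀0 hs.1)).continuousAt).continuousWithinAt
  obtain ⟨c, hc, hceq⟩ := exists_hasDerivAt_eq_slope y
    (fun s => ⟪gradient B (x s), F (x s)⟫) hs₀lt hcontIcc
    (fun s hs => hder s (le_trans hs₀0 (le_of_lt hs.1)))
  have hyc : y c < 0 := hyneg c hc.1 (le_of_lt hc.2)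
  have hαneg : α (y c) < 0 := by
    have := hα_mono hyc
    rwa [hα0] at this
  have hpos : 0 < ⟪gradient B (x c), F (x c)⟫ := by
    have := hcbf (x c)
    replace this : 0 ≤ ⟪gradient B (x c), F (x c)⟫ + α (y c) := this
    linarith [this, hαneg]
  have hslope : (y t - y s₀) / (t - s₀) < 0 := by
    apply div_neg_of_neg_of_pos
    · linarith [hneg, hys₀]
    · linarith
  rw [hceq] at hpos
  linarith
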